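/- arXiv:2006.05338 — 2 statements merged into one kernel-verified Lean document; each statement's English description precedes it below -/
import Mathlib

section
/- Lower-bound property of the classical DA training objective: let p^1,…,p^K and q^1,…,q^K be probability mass functions on a finite set obtained from fixed base distributions p^0 and q^0 by bijections T_1,…,T_K of the finite set (i.e., p^m(x) = p^0(T_m⁻¹(x)) and q^m(x) = q^0(T_m⁻¹(x))). Then for any weights w_m ≥ 0 with ∑ w_m = 1, the mixtures p = ∑_m w_m p^m and q = ∑_m w_m q^m satisfy JS(p ‖ q) ≤ JS(p^0 ‖ q^0). -/
open Real Finset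

/-- KL divergence on a finite set, with the convention `0 * log 0 = 0`. -/
noncomputable def KL {X : Type*} [Fintype X] (p q : X → ℝ) : ℝ :=
  ∑ x, p x * Real.log (p x / q x)

/-- Jensen–Shannon divergence on a finite set. -/
noncomputable def JS {X : Type*} [Fintype X] (p q : X → ℝ) : ℝ :=
  (1/2) * KL p (fun x => (p x + q x) / 2) + (1/2) * KL q (fun x => (p x + q x) / 2)

/-- The log-sum inequality. -/
lemma log_sum_ineq {ι : Type*} [Fintype ι] (a b : ι → ℝ)
    (ha : ∀ i, 0 ≤ a i) (hb : ∀ i, 0 ≤ b i) (h0 : ∀ i, b i = 0 → a i = 0) :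
    (∑ i, a i) * Real.log ((∑ i, a i) / (∑ i, b i)) ≤ ∑ i, a i * Real.log (a i / b i) := by
  by_cases hB : ∑ i, b i = 0
  · have hb0 : ∀ i, b i = 0 := fun i =>
      (Finset.sum_eq_zero_iff_of_nonneg (fun i _ => hb i)).mp hB i (Finset.mem_univ i)
    have ha0 : ∀ i, a i = 0 := fun i => h0 i (hb0 i)
    simp [ha0]
  · have hBpos : 0 < ∑ i, b i :=
      lt_of_le_of_ne (Finset.sum_nonneg fun i _ => hb i) (Ne.symm hB)
    set B := ∑ i, b i with hBdef
    set A := ∑ i, a i with hAdef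
    have key := convexOn_mul_log.map_sum_le (t := Finset.univ)
      (w := fun i => b i / B) (p := fun i => a i / b i)
      (fun i _ => div_nonneg (hb i) hBpos.le)
      (by rw [← Finset.sum_div, ← hBdef, div_self hB])
      (fun i _ => Set.mem_Ici.mpr (div_nonneg (ha i) (hb i)))
    have e1 : ∑ i, (b i / B) • (a i / b i) = A / B := by
      rw [hAdef, Finset.sum_div]
      refine Finset.sum_congr rfl fun i _ => ?_
      by_cases hbi : b i = 0
      · simp [hbi, h0 i hbi]
      · field_simp
        rw [smul_eq_mul, div_mul_div_comm, mul_comm (b i) (a i), mul_div_mul_right _ _ hbi,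
          mul_div_assoc', mul_comm B, mul_div_assoc, div_self hB, mul_one]
    have e2 : ∑ i, (b i / B) • ((a i / b i) * Real.log (a i / b i))
        = (∑ i, a i * Real.log (a i / b i)) / B := by
      rw [Finset.sum_div]
      refine Finset.sum_congr rfl fun i _ => ?_
      by_cases hbi : b i = 0
      · simp [hbi, h0 i hbi]
      · field_simp
        rw [smul_eq_mul, div_mul_div_comm, mul_comm (b i) (a i * Real.log (a i / b i)),
          mul_div_mul_right _ _ hbi, mul_div_assoc', mul_comm B, mul_div_assoc, div_self hB,
          mul_one]
    rw [e1, e2] at key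
    have := mul_le_mul_of_nonneg_left key hBpos.le
    calc A * Real.log (A / B) = B * (A / B * Real.log (A / B)) := by field_simp
      _ ≤ B * ((∑ i, a i * Real.log (a i / b i)) / B) := this
      _ = ∑ i, a i * Real.log (a i / b i) := by field_simp

/-- Mixture bound for one KL term of JS. -/
lemma KL_mix_le {X : Type*} [Fintype X] {K : ℕ}
    (r0 s0 : X → ℝ) (T : Fin K → X ≃ X) (w : Fin K → ℝ)
    (hr : ∀ x, 0 ≤ r0 x) (hs : ∀ x, 0 ≤ s0 x)
    (hw0 : ∀ m, 0 ≤ w m) (hw1 : ∑ m, w m = 1) :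
    KL (fun x => ∑ m, w m * r0 ((T m).symm x))
        (fun x => ((∑ m, w m * r0 ((T m).symm x)) + (∑ m, w m * s0 ((T m).symm x))) / 2)
      ≤ KL r0 (fun x => (r0 x + s0 x) / 2) := by
  unfold KL
  have step1 : ∀ x : X,
      (∑ m, w m * r0 ((T m).symm x)) *
        Real.log ((∑ m, w m * r0 ((T m).symm x)) /
          (((∑ m, w m * r0 ((T m).symm x)) + (∑ m, w m * s0 ((T m).symm x))) / 2))
      ≤ ∑ m, w m * (r0 ((T m).symm x) *
          Real.log (r0 ((T m).symm x) / ((r0 ((T m).symm x) + s0 ((T m).symm x)) / 2))) := by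
    intro x
    have hls := log_sum_ineq (fun m => w m * r0 ((T m).symm x))
      (fun m => w m * ((r0 ((T m).symm x) + s0 ((T m).symm x)) / 2))
      (fun m => mul_nonneg (hw0 m) (hr _))
      (fun m => mul_nonneg (hw0 m) (by have := hr ((T m).symm x); have := hs ((T m).symm x); linarith))
      (fun m hm => by
        rcases mul_eq_zero.mp hm with h | h
        · simp [h]
        · have h1 := hr ((T m).symm x); have h2 := hs ((T m).symm x)
          have : r0 ((T m).symm x) = 0 := by linarith
          simp [this])
    have eb : ∑ m, w m * ((r0 ((T m).symm x) + s0 ((T m).symm x)) / 2)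
        = ((∑ m, w m * r0 ((T m).symm x)) + (∑ m, w m * s0 ((T m).symm x))) / 2 := by
      rw [← Finset.sum_add_distrib, Finset.sum_div]
      exact Finset.sum_congr rfl fun m _ => by ring
    rw [eb] at hls
    refine hls.trans_eq (Finset.sum_congr rfl fun m _ => ?_)
    by_cases hwm : w m = 0
    · simp [hwm]
    · rw [mul_div_mul_left _ _ hwm, mul_assoc]
  calc ∑ x, (∑ m, w m * r0 ((T m).symm x)) *
        Real.log ((∑ m, w m * r0 ((T m).symm x)) /
          (((∑ m, w m * r0 ((T m).symm x)) + (∑ m, w m * s0 ((T m).symm x))) / 2))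
      ≤ ∑ x, ∑ m, w m * (r0 ((T m).symm x) *
          Real.log (r0 ((T m).symm x) / ((r0 ((T m).symm x) + s0 ((T m).symm x)) / 2))) :=
        Finset.sum_le_sum fun x _ => step1 x
    _ = ∑ m, w m * ∑ x, r0 ((T m).symm x) *
          Real.log (r0 ((T m).symm x) / ((r0 ((T m).symm x) + s0 ((T m).symm x)) / 2)) := by
        rw [Finset.sum_comm]
        exact Finset.sum_congr rfl fun m _ => by rw [Finset.mul_sum]
    _ = ∑ m, w m * ∑ x, r0 x * Real.log (r0 x / ((r0 x + s0 x) / 2)) := by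
        refine Finset.sum_congr rfl fun m _ => ?_
        congr 1
        exact Equiv.sum_comp (T m).symm
          (fun y => r0 y * Real.log (r0 y / ((r0 y + s0 y) / 2)))
    _ = ∑ x, r0 x * Real.log (r0 x / ((r0 x + s0 x) / 2)) := by
        rw [← Finset.sum_mul, hw1, one_mul]

/-- Lower-bound property of the classical DA objective: mixtures of common
bijective relabelings of `p⁰`, `q⁰` have JS divergence at most `JS(p⁰ ‖ q⁰)`. -/
theorem js_da_mixture_le {X : Type*} [Fintype X] {K : ℕ}
    (p0 q0 : X → ℝ) (T : Fin K → X ≃ X) (w : Fin K → ℝ)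
    (hp0 : ∀ x, 0 ≤ p0 x) (hq0 : ∀ x, 0 ≤ q0 x)
    (hp1 : ∑ x, p0 x = 1) (hq1 : ∑ x, q0 x = 1)
    (hw0 : ∀ m, 0 ≤ w m) (hw1 : ∑ m, w m = 1) :
    JS (fun x => ∑ m, w m * p0 ((T m).symm x))
        (fun x => ∑ m, w m * q0 ((T m).symm x))
      ≤ JS p0 q0 := by
  unfold JS
  have h1 := KL_mix_le p0 q0 T w hp0 hq0 hw0 hw1
  have h2 := KL_mix_le q0 p0 T w hq0 hp0 hw0 hw1
  have e1 : (fun x => ((∑ m, w m * q0 ((T m).symm x)) + (∑ m, w m * p0 ((T m).symm x))) / 2)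
      = (fun x => ((∑ m, w m * p0 ((T m).symm x)) + (∑ m, w m * q0 ((T m).symm x))) / 2) := by
    funext x; ring
  have e2 : (fun x => (q0 x + p0 x) / 2) = (fun x => (p0 x + q0 x) / 2) := by
    funext x; ring
  rw [e1, e2] at h2
  linarith
end

section
/- GAN value at the optimal discriminator equals JS up to constants: for probability mass functions p_d and p_g on a finite set with p_d(x)+p_g(x) > 0 for all x, define D*(x) = p_d(x)/(p_d(x)+p_g(x)). Then ∑_x p_d(x) log D*(x) + ∑_x p_g(x) log(1 − D*(x)) = −log 4 + 2·JS(p_d ‖ p_g). -/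
open Real Finset

/-- The GAN value at the optimal discriminator `D*(x) = p_d(x)/(p_d(x)+p_g(x))`
is `-log 4 + 2 · JS(p_d ‖ p_g)`. -/
theorem gan_value_at_optimal_discriminator {X : Type*} [Fintype X]
    (pd pg : X → ℝ)
    (hpd0 : ∀ x, 0 ≤ pd x) (hpg0 : ∀ x, 0 ≤ pg x)
    (hpd1 : ∑ x, pd x = 1) (hpg1 : ∑ x, pg x = 1)
    (hpos : ∀ x, 0 < pd x + pg x) :
    (∑ x, pd x * Real.log (pd x / (pd x + pg x)))
      + (∑ x, pg x * Real.log (1 - pd x / (pd x + pg x)))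
    = -Real.log 4 + 2 * JS pd pg := by
  have key : ∀ (a s : ℝ), 0 ≤ a → 0 < s →
      a * Real.log (a / (s / 2)) = a * Real.log (a / s) + a * Real.log 2 := by
    intro a s ha hs
    rcases eq_or_lt_of_le ha with h | h
    · simp [← h]
    · have hd : a / (s / 2) = (a / s) * 2 := by field_simp
      rw [hd, Real.log_mul (by positivity) two_ne_zero, mul_add]
  have h1 : ∀ x, pd x * Real.log (pd x / ((pd x + pg x) / 2))
      = pd x * Real.log (pd x / (pd x + pg x)) + pd x * Real.log 2 :=
    fun x => key _ _ (hpd0 x) (hpos x)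
  have h2 : ∀ x, pg x * Real.log (pg x / ((pd x + pg x) / 2))
      = pg x * Real.log (1 - pd x / (pd x + pg x)) + pg x * Real.log 2 := by
    intro x
    have hs := (hpos x).ne'
    have : 1 - pd x / (pd x + pg x) = pg x / (pd x + pg x) := by field_simp; ring
    rw [this]
    exact key _ _ (hpg0 x) (hpos x)
  have h4 : Real.log 4 = 2 * Real.log 2 := by
    rw [show (4:ℝ) = 2^2 by norm_num, Real.log_pow]; push_cast; ring
  simp only [JS, KL]
  simp only [h1, h2, Finset.sum_add_distrib, ← Finset.sum_mul, hpd1, hpg1, h4]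
  ring
end
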